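/- The set $G = \{x \in \mathbb{F}_{81} : x^{20} = 1\}$ is a cap set in $\mathbb{F}_{81}$, i.e., there are no pairwise distinct $a, b, c \in G$ with $a + b + c = 0$. -/

import Mathlib

lemma key_lemma {F : Type*} [CommRing F] (u : F) (h3 : (3 : F) = 0)
    (h1 : u ^ 20 = 1) (h2 : (u + 1) ^ 20 = 1) : u = 1 := by
  linear_combination ((1:F) + (2:F) * u^1 + (1:F) * u^2 + (1:F) * u^8 + (2:F) * u^9 + (2:F) * u^10 + (1:F) * u^12 + (1:F) * u^13 + (2:F) * u^14) * h1 + ((2:F) * u^1 + (2:F) * u^2 + (2:F) * u^3 + (2:F) * u^4 + (2:F) * u^5 + (2:F) * u^6 + (1:F) * u^7 + (2:F) * u^8 + (1:F) * u^9 + (1:F) * u^10 + (1:F) * u^11 + (1:F) * u^12 + (1:F) * u^14) * h2 + ((1:F) * u^1 + (-13:F) * u^2 + (-140:F) * u^3 + (-900:F) * u^4 + (-4130:F) * u^5 + (-14466:F) * u^6 + (-40306:F) * u^7 + (-91979:F) * u^8 + (-175902:F) * u^9 + (-287552:F) * u^10 + (-409425:F) * u^11 + (-517465:F) * u^12 +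 (-592078:F) * u^13 + (-625663:F) * u^14 + (-622377:F) * u^15 + (-592553:F) * u^16 + (-546896:F) * u^17 + (-493335:F) * u^18 + (-436506:F) * u^19 + (-378595:F) * u^20 + (-320456:F) * u^21 + (-262531:F) * u^22 + (-205575:F) * u^23 + (-151254:F) * u^24 + (-102367:F) * u^25 + (-62207:F) * u^26 + (-33080:F) * u^27 + (-14986:F) * u^28 + (-5619:F) * u^29 + (-1686:F) * u^30 + (-387:F) * u^31 + (-64:F) * u^32 + (-7:F) * u^33 + (-1:F) * u^34) * h3

theorem stmt1 (F : Type*) [Field F] [Fintype F] (hF : Fintype.card F = 81) :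
    ¬ ∃ a b c : F, a ∈ {x : F | x ^ 20 = 1} ∧ b ∈ {x : F | x ^ 20 = 1} ∧
      c ∈ {x : F | x ^ 20 = 1} ∧ a ≠ b ∧ a ≠ c ∧ b ≠ c ∧ a + b + c = 0 := by
  -- characteristic is 3
  have h3 : (3 : F) = 0 := by
    obtain ⟨n, hp, hc⟩ := FiniteField.card F (ringChar F)
    have hdvd : ringChar F ∣ 81 := by
      rw [← hF, hc]; exact dvd_pow_self _ (by positivity)
    have hr3 : ringChar F = 3 := by
      have : ringChar F ∣ 3 ^ 4 := by norm_num at hdvd ⊢; exact hdvd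
      have := (Nat.Prime.dvd_of_dvd_pow hp this)
      exact (Nat.prime_dvd_prime_iff_eq hp (by norm_num)).mp this
    have := CharP.cast_eq_zero F (ringChar F)
    rwa [hr3] at this
  rintro ⟨a, b, c, ha, hb, hc, hab, hac, hbc, hsum⟩
  simp only [Set.mem_setOf_eq] at ha hb hc
  have ha0 : a ≠ 0 := by rintro rfl; simp at ha
  set u : F := b / a with hu
  have h1 : u ^ 20 = 1 := by
    rw [hu, div_pow, hb, ha, div_one]
  have h2 : (u + 1) ^ 20 = 1 := by
    have huv : u + 1 = -(c / a) := by
      rw [hu, eq_neg_iff_add_eq_zero, div_add_one ha0, ← add_div, div_eq_zero_iff]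
      left
      linear_combination hsum
    rw [huv, neg_pow, div_pow, hc, ha]
    norm_num
  have := key_lemma u h3 h1 h2
  apply hab
  rw [hu, div_eq_one_iff_eq ha0] at this
  exact this.symm
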